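/- For λ ∈ [0,1) and τ ∈ (0,1), the multi-step expectile Bellman operator T_{τ,λ} V = (1−λ) Σ_{n=1}^∞ λ^{n−1} (T_τ)^n V is a sup-norm contraction with modulus γ_{τ,λ} = (1−λ)γ_τ / (1 − λγ_τ), where γ_τ = 1 − 2α(1−γ)·min(τ,1−τ) < 1. -/
import Mathlib


open Finset

private lemma fb_aux (τ x y : ℝ) (hxy : y ≤ x) :
    min τ (1-τ) * (x - y) ≤
      (τ * max x 0 + (1-τ) * min x 0) - (τ * max y 0 + (1-τ) * min y 0) ∧
    (τ * max x 0 + (1-τ) * min x 0) - (τ * max y 0 + (1-τ) * min y 0)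
        ≤ max τ (1-τ) * (x - y) := by
  have h1 := min_le_left τ (1-τ)
  have h2 := min_le_right τ (1-τ)
  have h3 := le_max_left τ (1-τ)
  have h4 := le_max_right τ (1-τ)
  have ht : 0 ≤ x - y := sub_nonneg.mpr hxy
  rcases le_total x 0 with hx | hx <;> rcases le_total y 0 with hy | hy
  · rw [max_eq_right hx, min_eq_left hx, max_eq_right hy, min_eq_left hy]
    constructor <;>
      nlinarith [mul_le_mul_of_nonneg_right h2 ht, mul_le_mul_of_nonneg_right h4 ht]
  · have hx0 : x = 0 := le_antisymm hx (le_trans hy hxy)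
    have hy0 : y = 0 := le_antisymm (hx0 ▸ hxy) hy
    simp [hx0, hy0]
  · rw [max_eq_left hx, min_eq_right hx, max_eq_right hy, min_eq_left hy]
    have hny : 0 ≤ -y := neg_nonneg.mpr hy
    constructor <;>
      nlinarith [mul_le_mul_of_nonneg_right h1 hx, mul_le_mul_of_nonneg_right h2 hny,
        mul_le_mul_of_nonneg_right h3 hx, mul_le_mul_of_nonneg_right h4 hny]
  · rw [max_eq_left hx, min_eq_right hx, max_eq_left hy, min_eq_right hy]
    constructor <;>
      nlinarith [mul_le_mul_of_nonneg_right h1 ht, mul_le_mul_of_nonneg_right h3 ht]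

private lemma term_aux (α γ τ K D d x y : ℝ)
    (hγ0 : 0 ≤ γ) (hγ1 : γ < 1) (hα0 : 0 < α)
    (hα : 2 * α * max τ (1 - τ) ≤ 1)
    (hmn : 0 ≤ min τ (1-τ))
    (hD : |D| ≤ K) (hd : |d| ≤ K)
    (hxy : x - y = γ * d - D) (hyx : y ≤ x) :
    |D + 2 * α * ((τ * max x 0 + (1-τ) * min x 0)
        - (τ * max y 0 + (1-τ) * min y 0))|
      ≤ (1 - 2 * α * (1 - γ) * min τ (1-τ)) * K := by
  obtain ⟨hlo, bot⟩ := fb_aux τ x y hyx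
  rw [hxy] at hlo bot
  rw [abs_le] at hD hd ⊢
  obtain ⟨hD1, hD2⟩ := hD
  obtain ⟨hd1, hd2⟩ := hd
  have hK : 0 ≤ K := le_trans (abs_nonneg D) (by rw [abs_le]; exact ⟨hD1, hD2⟩)
  have hmx : min τ (1-τ) ≤ max τ (1-τ) := min_le_max
  have hα' : 0 ≤ 2 * α := by linarith
  have h2mx : 2 * α * max τ (1-τ) ≤ 1 := hα
  have h2mn : 2 * α * min τ (1-τ) ≤ 1 := by nlinarith [mul_le_mul_of_nonneg_left hmx hα']
  constructor
  · have A := mul_le_mul_of_nonneg_left hlo hα'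
    have B : 0 ≤ (1 - 2 * α * min τ (1-τ)) * (D + K) :=
      mul_nonneg (by linarith) (by linarith)
    have C : 0 ≤ 2 * α * min τ (1-τ) * γ * (d + K) :=
      mul_nonneg (mul_nonneg (mul_nonneg hα' hmn) hγ0) (by linarith)
    nlinarith [A, B, C]
  · have A := mul_le_mul_of_nonneg_left bot hα'
    have B : 0 ≤ (1 - 2 * α * max τ (1-τ)) * (K - D) :=
      mul_nonneg (by linarith) (by linarith)
    have C : 0 ≤ 2 * α * max τ (1-τ) * γ * (K - d) :=
      mul_nonneg (mul_nonneg (mul_nonneg hα' (le_trans hmn hmx)) hγ0) (by linarith)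
    have E : 0 ≤ 2 * α * (1 - γ) * (max τ (1-τ) - min τ (1-τ)) * K :=
      mul_nonneg (mul_nonneg (mul_nonneg hα' (by linarith)) (by linarith)) hK
    nlinarith [A, B, C, E]

private lemma term_full (α γ τ K D d x y : ℝ)
    (hγ0 : 0 ≤ γ) (hγ1 : γ < 1) (hα0 : 0 < α)
    (hα : 2 * α * max τ (1 - τ) ≤ 1)
    (hmn : 0 ≤ min τ (1-τ))
    (hD : |D| ≤ K) (hd : |d| ≤ K)
    (hxy : x - y = γ * d - D) :
    |D + 2 * α * ((τ * max x 0 + (1-τ) * min x 0)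
        - (τ * max y 0 + (1-τ) * min y 0))|
      ≤ (1 - 2 * α * (1 - γ) * min τ (1-τ)) * K := by
  rcases le_total y x with h | h
  · exact term_aux α γ τ K D d x y hγ0 hγ1 hα0 hα hmn hD hd hxy h
  · have h2 := term_aux α γ τ K (-D) (-d) y x hγ0 hγ1 hα0 hα hmn
      (by rwa [abs_neg]) (by rwa [abs_neg]) (by linarith) h
    have heq : -D + 2 * α * ((τ * max y 0 + (1-τ) * min y 0)
        - (τ * max x 0 + (1-τ) * min x 0))
      = -(D + 2 * α * ((τ * max x 0 + (1-τ) * min x 0)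
        - (τ * max y 0 + (1-τ) * min y 0))) := by ring
    rw [heq, abs_neg] at h2
    exact h2

set_option maxHeartbeats 1000000 in
/-- The multi-step expectile Bellman operator
`T_{τ,λ} V = (1−λ) Σ_{n≥1} λ^{n−1} (T_τ)^n V` is a sup-norm contraction with
modulus `γ_{τ,λ} = (1−λ)γ_τ / (1 − λγ_τ)` where `γ_τ = 1 − 2α(1−γ)min(τ,1−τ)`. -/
theorem multistep_expectile_contraction {S A : Type*}
    [Fintype S] [Nonempty S] [Fintype A] [Nonempty A]
    (pol : S → A → ℝ) (P : S → A → S → ℝ) (R : S → A → S → ℝ) (γ α τ lam : ℝ)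
    (hpol0 : ∀ s a, 0 ≤ pol s a) (hpol1 : ∀ s, ∑ a, pol s a = 1)
    (hP0 : ∀ s a s', 0 ≤ P s a s') (hP1 : ∀ s a, ∑ s', P s a s' = 1)
    (hγ0 : 0 ≤ γ) (hγ1 : γ < 1) (hτ0 : 0 < τ) (hτ1 : τ < 1)
    (hα0 : 0 < α) (hα : 2 * α * max τ (1 - τ) ≤ 1)
    (hlam0 : 0 ≤ lam) (hlam1 : lam < 1)
    (Tτ Tlam : (S → ℝ) → (S → ℝ))
    (hTτ : ∀ V s, Tτ V s =
      V s + 2 * α * ∑ a, ∑ s', pol s a * P s a s' *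
        (τ * max (R s a s' + γ * V s' - V s) 0
          + (1 - τ) * min (R s a s' + γ * V s' - V s) 0))
    (hsum : ∀ (V : S → ℝ) (s : S), Summable (fun n : ℕ => lam ^ n * (Tτ^[n + 1] V s)))
    (hTlam : ∀ V s, Tlam V s = (1 - lam) * ∑' n : ℕ, lam ^ n * (Tτ^[n + 1] V s))
    (V1 V2 : S → ℝ) :
    ‖Tlam V1 - Tlam V2‖ ≤
      (1 - lam) * (1 - 2 * α * (1 - γ) * min τ (1 - τ)) /
        (1 - lam * (1 - 2 * α * (1 - γ) * min τ (1 - τ))) * ‖V1 - V2‖ := by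
  set mn := min τ (1 - τ) with hmndef
  have hmn : 0 < mn := lt_min hτ0 (by linarith)
  have hmx : mn ≤ max τ (1 - τ) := min_le_max
  set gτ := 1 - 2 * α * (1 - γ) * mn with hgτdef
  have hgτ1 : gτ < 1 := by
    have : 0 < 2 * α * (1 - γ) * mn :=
      mul_pos (mul_pos (mul_pos two_pos hα0) (by linarith)) hmn
    simp only [hgτdef]; linarith
  have hgτ0 : 0 ≤ gτ := by
    have h1 : 2 * α * (1 - γ) * mn ≤ 2 * α * mn := by nlinarith
    have h2 : 2 * α * mn ≤ 2 * α * max τ (1 - τ) := by nlinarith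
    simp only [hgτdef]; linarith
  -- one-step contraction
  have step : ∀ (W1 W2 : S → ℝ), ‖Tτ W1 - Tτ W2‖ ≤ gτ * ‖W1 - W2‖ := by
    intro W1 W2
    have hKW : ∀ s, |W1 s - W2 s| ≤ ‖W1 - W2‖ := by
      intro s
      have := norm_le_pi_norm (W1 - W2) s
      simpa [Real.norm_eq_abs] using this
    rw [pi_norm_le_iff_of_nonneg (mul_nonneg hgτ0 (norm_nonneg _))]
    intro s
    rw [Real.norm_eq_abs, Pi.sub_apply]
    have hw1 : ∑ a, ∑ s', pol s a * P s a s' = 1 := by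
      have : ∀ a, ∑ s', pol s a * P s a s' = pol s a := by
        intro a; rw [← Finset.mul_sum, hP1 s a, mul_one]
      simp only [this, hpol1 s]
    rw [hTτ, hTτ]
    set E1 : A → S → ℝ := fun a s' =>
      τ * max (R s a s' + γ * W1 s' - W1 s) 0
        + (1 - τ) * min (R s a s' + γ * W1 s' - W1 s) 0 with hE1
    set E2 : A → S → ℝ := fun a s' =>
      τ * max (R s a s' + γ * W2 s' - W2 s) 0
        + (1 - τ) * min (R s a s' + γ * W2 s' - W2 s) 0 with hE2
    have split : ∀ a s', pol s a * P s a s' *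
        ((W1 s - W2 s) + 2 * α * (E1 a s' - E2 a s'))
        = pol s a * P s a s' * (W1 s - W2 s)
          + (2 * α * (pol s a * P s a s' * E1 a s')
            - 2 * α * (pol s a * P s a s' * E2 a s')) := by
      intro a s'; ring
    have c1 : ∑ a, ∑ s', pol s a * P s a s' * (W1 s - W2 s) = W1 s - W2 s := by
      simp only [← Finset.sum_mul]
      rw [hw1, one_mul]
    have hX : W1 s + 2 * α * (∑ a, ∑ s', pol s a * P s a s' * E1 a s')
        - (W2 s + 2 * α * (∑ a, ∑ s', pol s a * P s a s' * E2 a s'))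
        = ∑ a, ∑ s', pol s a * P s a s' *
            ((W1 s - W2 s) + 2 * α * (E1 a s' - E2 a s')) := by
      simp only [split, Finset.sum_add_distrib, Finset.sum_sub_distrib,
        ← Finset.mul_sum, c1]
      ring
    rw [hX]
    calc |∑ a, ∑ s', pol s a * P s a s' *
            ((W1 s - W2 s) + 2 * α * (E1 a s' - E2 a s'))|
        ≤ ∑ a, ∑ s', |pol s a * P s a s' *
            ((W1 s - W2 s) + 2 * α * (E1 a s' - E2 a s'))| := by
          refine le_trans (Finset.abs_sum_le_sum_abs _ _) ?_
          exact Finset.sum_le_sum fun a _ => Finset.abs_sum_le_sum_abs _ _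
      _ ≤ ∑ a, ∑ s', pol s a * P s a s' * (gτ * ‖W1 - W2‖) := by
          refine Finset.sum_le_sum fun a _ => Finset.sum_le_sum fun s' _ => ?_
          rw [abs_mul, abs_of_nonneg (mul_nonneg (hpol0 s a) (hP0 s a s'))]
          refine mul_le_mul_of_nonneg_left ?_ (mul_nonneg (hpol0 s a) (hP0 s a s'))
          have hterm := term_full α γ τ ‖W1 - W2‖ (W1 s - W2 s) (W1 s' - W2 s')
            (R s a s' + γ * W1 s' - W1 s) (R s a s' + γ * W2 s' - W2 s)
            hγ0 hγ1 hα0 hα (le_of_lt hmn) (hKW s) (hKW s') (by ring)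
          simp only [hE1, hE2]
          calc |(W1 s - W2 s) + 2 * α *
              ((τ * max (R s a s' + γ * W1 s' - W1 s) 0
                + (1 - τ) * min (R s a s' + γ * W1 s' - W1 s) 0)
               - (τ * max (R s a s' + γ * W2 s' - W2 s) 0
                + (1 - τ) * min (R s a s' + γ * W2 s' - W2 s) 0))|
              ≤ (1 - 2 * α * (1 - γ) * mn) * ‖W1 - W2‖ := hterm
            _ = gτ * ‖W1 - W2‖ := by rw [hgτdef]
      _ = gτ * ‖W1 - W2‖ := by
          simp only [← Finset.sum_mul]; rw [hw1, one_mul]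
  -- iterated contraction
  have iter : ∀ n : ℕ, ‖Tτ^[n] V1 - Tτ^[n] V2‖ ≤ gτ ^ n * ‖V1 - V2‖ := by
    intro n
    induction n with
    | zero => simp
    | succ n ih =>
        rw [Function.iterate_succ_apply', Function.iterate_succ_apply']
        calc ‖Tτ (Tτ^[n] V1) - Tτ (Tτ^[n] V2)‖
            ≤ gτ * ‖Tτ^[n] V1 - Tτ^[n] V2‖ := step _ _
          _ ≤ gτ * (gτ ^ n * ‖V1 - V2‖) := mul_le_mul_of_nonneg_left ih hgτ0
          _ = gτ ^ (n + 1) * ‖V1 - V2‖ := by ring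
  set K := ‖V1 - V2‖ with hKdef
  have hK0 : 0 ≤ K := norm_nonneg _
  have hlg : lam * gτ < 1 := by
    rcases eq_or_lt_of_le hlam0 with h | h
    · rw [← h]; norm_num
    · calc lam * gτ ≤ lam * 1 := mul_le_mul_of_nonneg_left (le_of_lt hgτ1) hlam0
        _ < 1 := by linarith
  have hlg0 : 0 ≤ lam * gτ := mul_nonneg hlam0 hgτ0
  -- the geometric majorant
  have hsumg : Summable (fun n : ℕ => (lam * gτ) ^ n * (gτ * K)) :=
    (summable_geometric_of_lt_one hlg0 hlg).mul_right _
  rw [pi_norm_le_iff_of_nonneg]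
  · intro s
    rw [Real.norm_eq_abs, Pi.sub_apply, hTlam, hTlam, ← mul_sub,
      ← Summable.tsum_sub (hsum V1 s) (hsum V2 s)]
    have hptw : ∀ n : ℕ, |lam ^ n * Tτ^[n + 1] V1 s - lam ^ n * Tτ^[n + 1] V2 s|
        ≤ (lam * gτ) ^ n * (gτ * K) := by
      intro n
      rw [← mul_sub, abs_mul, abs_pow, abs_of_nonneg hlam0]
      have h1 : |Tτ^[n + 1] V1 s - Tτ^[n + 1] V2 s| ≤ gτ ^ (n + 1) * K := by
        have := norm_le_pi_norm (Tτ^[n + 1] V1 - Tτ^[n + 1] V2) s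
        simp only [Real.norm_eq_abs, Pi.sub_apply] at this
        exact le_trans this (iter (n + 1))
      calc lam ^ n * |Tτ^[n + 1] V1 s - Tτ^[n + 1] V2 s|
          ≤ lam ^ n * (gτ ^ (n + 1) * K) :=
            mul_le_mul_of_nonneg_left h1 (pow_nonneg hlam0 n)
        _ = (lam * gτ) ^ n * (gτ * K) := by rw [mul_pow]; ring
    have hsub : Summable (fun n : ℕ =>
        lam ^ n * Tτ^[n + 1] V1 s - lam ^ n * Tτ^[n + 1] V2 s) :=
      (hsum V1 s).sub (hsum V2 s)
    have habs : Summable (fun n : ℕ =>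
        |lam ^ n * Tτ^[n + 1] V1 s - lam ^ n * Tτ^[n + 1] V2 s|) := by
      refine Summable.of_nonneg_of_le (fun n => abs_nonneg _) hptw hsumg
    have hbound : |∑' n : ℕ, (lam ^ n * Tτ^[n + 1] V1 s - lam ^ n * Tτ^[n + 1] V2 s)|
        ≤ ∑' n : ℕ, (lam * gτ) ^ n * (gτ * K) := by
      calc |∑' n : ℕ, (lam ^ n * Tτ^[n + 1] V1 s - lam ^ n * Tτ^[n + 1] V2 s)|
          ≤ ∑' n : ℕ, |lam ^ n * Tτ^[n + 1] V1 s - lam ^ n * Tτ^[n + 1] V2 s| := by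
            simp only [← Real.norm_eq_abs]
            exact norm_tsum_le_tsum_norm
              (by simpa only [Real.norm_eq_abs] using habs)
        _ ≤ ∑' n : ℕ, (lam * gτ) ^ n * (gτ * K) :=
            Summable.tsum_le_tsum hptw habs hsumg
    have hgeo : ∑' n : ℕ, (lam * gτ) ^ n * (gτ * K)
        = (1 / (1 - lam * gτ)) * (gτ * K) := by
      rw [tsum_mul_right, tsum_geometric_of_lt_one hlg0 hlg]
      ring
    rw [abs_mul, abs_of_nonneg (by linarith : (0:ℝ) ≤ 1 - lam)]
    calc (1 - lam) * |∑' n : ℕ, (lam ^ n * Tτ^[n + 1] V1 s - lam ^ n * Tτ^[n + 1] V2 s)|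
        ≤ (1 - lam) * ((1 / (1 - lam * gτ)) * (gτ * K)) := by
          refine mul_le_mul_of_nonneg_left ?_ (by linarith)
          rw [← hgeo]; exact hbound
      _ = (1 - lam) * gτ / (1 - lam * gτ) * K := by
          ring
  · have hden : 0 < 1 - lam * gτ := by linarith
    apply mul_nonneg
    apply div_nonneg
    · apply mul_nonneg (by linarith) hgτ0
    · linarith
    · exact hK0
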